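/- Let E₁ → M₁ and E₂ → M₂ be smooth real vector bundles with finite-dimensional fibers over finite-dimensional smooth manifolds, and let Φ : TotalSpace E₁ → TotalSpace E₂ be a smooth map between the total spaces which intertwines the fiberwise multiplications by reals: Φ(t • v) = t • Φ(v) for every t ∈ ℝ and every point v of the total space of E₁ (where t • v denotes scalar multiplication in the fiber containing v). Then Φ is a morphism of vector bundles: (i) there exists a smooth map φ : M₁ → M₂ such that π₂ ∘ Φ = φ ∘ π₁, where πᵢ are the bundle projections; and (ii) for every m ∈ M₁ the induced map on fibers (E₁)_m → (E₂)_{φ(m)} determined by Φ is linear. -/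

import Mathlib

open Manifold Bundle

/-- A map differentiable at `0` which is homogeneous of degree 1 equals its derivative at `0`. -/
lemma homog_eq_fderiv_aux {F₁ F₂ : Type*} [NormedAddCommGroup F₁] [NormedSpace ℝ F₁]
    [NormedAddCommGroup F₂] [NormedSpace ℝ F₂] {g : F₁ → F₂}
    (hg : DifferentiableAt ℝ g 0) (hom : ∀ (t : ℝ) x, g (t • x) = t • g x) (x : F₁) :
    g x = fderiv ℝ g 0 x := by
  have hline : HasDerivAt (fun t : ℝ => t • x) x 0 := by
    simpa using (hasDerivAt_id (0 : ℝ)).smul_const x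
  have h1 : HasDerivAt (fun t : ℝ => g (t • x)) (fderiv ℝ g 0 x) 0 := by
    have hg0 : DifferentiableAt ℝ g ((0 : ℝ) • x) := by simpa using hg
    have := hg0.hasFDerivAt.comp_hasDerivAt 0 hline
    simpa [Function.comp_def] using this
  have h2 : HasDerivAt (fun t : ℝ => t • g x) (g x) 0 := by
    simpa using (hasDerivAt_id (0 : ℝ)).smul_const (g x)
  have heq : (fun t : ℝ => g (t • x)) = fun t : ℝ => t • g x := funext fun t => hom t x
  rw [heq] at h1
  exact h2.unique h1

/-- **Multiplication by reals is enough: morphisms of vector bundles.**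
A smooth map `Φ` between total spaces of smooth vector bundles which intertwines the
fiberwise multiplications by reals, `Φ (t • v) = t • Φ v`, is a morphism of vector
bundles: it covers a smooth map `φ` of the bases and is linear on fibers. -/
theorem intertwines_scalar_mult_is_vector_bundle_morphism
    {d₁ d₂ : ℕ}
    {M₁ : Type*} [TopologicalSpace M₁] [ChartedSpace (EuclideanSpace ℝ (Fin d₁)) M₁]
    [IsManifold (𝓡 d₁) (⊤ : ℕ∞) M₁]
    {M₂ : Type*} [TopologicalSpace M₂] [ChartedSpace (EuclideanSpace ℝ (Fin d₂)) M₂]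
    [IsManifold (𝓡 d₂) (⊤ : ℕ∞) M₂]
    {F₁ : Type*} [NormedAddCommGroup F₁] [NormedSpace ℝ F₁] [FiniteDimensional ℝ F₁]
    {F₂ : Type*} [NormedAddCommGroup F₂] [NormedSpace ℝ F₂] [FiniteDimensional ℝ F₂]
    (E₁ : M₁ → Type*) [∀ x, AddCommGroup (E₁ x)] [∀ x, Module ℝ (E₁ x)]
    [∀ x, TopologicalSpace (E₁ x)]
    [TopologicalSpace (TotalSpace F₁ E₁)] [FiberBundle F₁ E₁] [VectorBundle ℝ F₁ E₁]
    [ContMDiffVectorBundle (⊤ : ℕ∞) F₁ E₁ (𝓡 d₁)]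
    (E₂ : M₂ → Type*) [∀ x, AddCommGroup (E₂ x)] [∀ x, Module ℝ (E₂ x)]
    [∀ x, TopologicalSpace (E₂ x)]
    [TopologicalSpace (TotalSpace F₂ E₂)] [FiberBundle F₂ E₂] [VectorBundle ℝ F₂ E₂]
    [ContMDiffVectorBundle (⊤ : ℕ∞) F₂ E₂ (𝓡 d₂)]
    (Φ : TotalSpace F₁ E₁ → TotalSpace F₂ E₂)
    (hΦ : ContMDiff ((𝓡 d₁).prod 𝓘(ℝ, F₁)) ((𝓡 d₂).prod 𝓘(ℝ, F₂)) (⊤ : ℕ∞) Φ)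
    (hhom : ∀ (t : ℝ) (v : TotalSpace F₁ E₁),
      Φ (TotalSpace.mk v.proj (t • v.2)) = TotalSpace.mk (Φ v).proj (t • (Φ v).2)) :
    ∃ φ : M₁ → M₂, ContMDiff (𝓡 d₁) (𝓡 d₂) (⊤ : ℕ∞) φ ∧
      (∀ v : TotalSpace F₁ E₁, (Φ v).proj = φ v.proj) ∧
      ∀ m : M₁, ∃ L : E₁ m →ₗ[ℝ] E₂ (φ m),
        ∀ e : E₁ m, Φ (TotalSpace.mk m e) = TotalSpace.mk (φ m) (L e) := by
  classical
  set φ : M₁ → M₂ := fun m => (Φ (TotalSpace.mk m (0 : E₁ m))).proj with hφdef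
  have hproj : ∀ v : TotalSpace F₁ E₁, (Φ v).proj = φ v.proj := by
    intro v
    have h := hhom 0 v
    simp only [zero_smul] at h
    simp only [hφdef, h]
  have hφs : ContMDiff (𝓡 d₁) (𝓡 d₂) (⊤ : ℕ∞) φ := by
    have hcomp : φ = (π F₂ E₂) ∘ Φ ∘ (zeroSection F₁ E₁) := rfl
    rw [hcomp]
    exact (Bundle.contMDiff_proj E₂).comp (hΦ.comp (Bundle.contMDiff_zeroSection ℝ E₁))
  refine ⟨φ, hφs, hproj, fun m => ?_⟩
  set e₁ := trivializationAt F₁ E₁ m with he₁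
  set e₂ := trivializationAt F₂ E₂ (φ m) with he₂
  have hm₁ : m ∈ e₁.baseSet := FiberBundle.mem_baseSet_trivializationAt F₁ E₁ m
  have hm₂ : φ m ∈ e₂.baseSet := FiberBundle.mem_baseSet_trivializationAt F₂ E₂ (φ m)
  set g : F₁ → F₂ := fun w => (e₂ (Φ (TotalSpace.mk m (e₁.symm m w)))).2 with hg
  -- the section `w ↦ ⟨m, e₁.symm m w⟩` is smooth
  set s : F₁ → TotalSpace F₁ E₁ := fun w => TotalSpace.mk m (e₁.symm m w) with hs
  have hs_smooth : ContMDiffAt 𝓘(ℝ, F₁) ((𝓡 d₁).prod 𝓘(ℝ, F₁)) (⊤ : ℕ∞) s 0 := by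
    rw [Bundle.contMDiffAt_totalSpace]
    refine ⟨contMDiffAt_const, ?_⟩
    have : (fun w : F₁ => (trivializationAt F₁ E₁ (s 0).proj (s w)).2) = fun w => w := by
      funext w
      have := e₁.apply_mk_symm hm₁ w
      simp only [hs]
      rw [← he₁] at *
      exact congrArg Prod.snd this
    rw [this]
    exact contMDiffAt_id
  -- hence `g` is smooth at `0`
  have hΦs0 : (Φ (s 0)).proj = φ m := hproj (s 0)
  have hg_smooth : ContMDiffAt 𝓘(ℝ, F₁) 𝓘(ℝ, F₂) (⊤ : ℕ∞) g 0 := by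
    have h := (Bundle.contMDiffAt_totalSpace (f := Φ ∘ s) (x₀ := 0)).1 (hΦ.contMDiffAt.comp 0 hs_smooth)
    have h2 := h.2
    simp only [Function.comp_apply] at h2
    rw [hΦs0] at h2
    exact h2
  have hg_diff : DifferentiableAt ℝ g 0 :=
    ((contMDiffAt_iff_contDiffAt.1 hg_smooth).differentiableAt (by simp))
  -- homogeneity of `g`
  have hg_hom : ∀ (t : ℝ) (w : F₁), g (t • w) = t • g w := by
    intro t w
    have hsymm_smul : e₁.symm m (t • w) = t • e₁.symm m w :=
      by rw [← e₁.symmL_apply (R := ℝ) hm₁, ← e₁.symmL_apply (R := ℝ) hm₁]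
         exact (e₁.symmL ℝ m).map_smul t w
    set v : TotalSpace F₁ E₁ := TotalSpace.mk m (e₁.symm m w) with hv
    have hb : (Φ v).proj ∈ e₂.baseSet := by rw [hproj v]; exact hm₂
    have key := hhom t v
    have hlin : (e₂ (TotalSpace.mk (Φ v).proj (t • (Φ v).2))).2
        = t • (e₂ (TotalSpace.mk (Φ v).proj ((Φ v).2))).2 := by
      rw [e₂.apply_eq_prod_continuousLinearEquivAt ℝ _ hb,
        e₂.apply_eq_prod_continuousLinearEquivAt ℝ _ hb]
      exact map_smul _ t _
    calc g (t • w) = (e₂ (Φ (TotalSpace.mk m (e₁.symm m (t • w))))).2 := rfl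
      _ = (e₂ (Φ (TotalSpace.mk m (t • e₁.symm m w)))).2 := by rw [hsymm_smul]
      _ = (e₂ (TotalSpace.mk (Φ v).proj (t • (Φ v).2))).2 := by rw [key]
      _ = t • (e₂ (TotalSpace.mk (Φ v).proj ((Φ v).2))).2 := hlin
      _ = t • g w := rfl
  -- `g` is linear, being equal to its derivative at the origin
  set A : F₁ →L[ℝ] F₂ := fderiv ℝ g 0 with hA
  have hgA : ∀ w, g w = A w := homog_eq_fderiv_aux hg_diff hg_hom
  refine ⟨(e₂.symmL ℝ (φ m)).toLinearMap ∘ₗ A.toLinearMap ∘ₗ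
      (e₁.continuousLinearMapAt ℝ m).toLinearMap, fun e => ?_⟩
  have hwe : e₁.symm m (e₁.continuousLinearMapAt ℝ m e) = e :=
    by rw [← e₁.symmL_apply (R := ℝ) hm₁]; exact e₁.symmL_continuousLinearMapAt (R := ℝ) hm₁ e
  have hgAe : g (e₁.continuousLinearMapAt ℝ m e) = (e₂ (Φ (TotalSpace.mk m e))).2 := by
    simp only [hg]
    rw [hwe]
  have hxsrc : Φ (TotalSpace.mk m e) ∈ e₂.source := e₂.mem_source.2 (by rw [hproj]; exact hm₂)
  have hfst : (e₂ (Φ (TotalSpace.mk m e))).1 = φ m := by rw [e₂.coe_fst hxsrc, hproj]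
  have hL : ((e₂.symmL ℝ (φ m)).toLinearMap ∘ₗ A.toLinearMap ∘ₗ
      (e₁.continuousLinearMapAt ℝ m).toLinearMap) e
      = e₂.symm (φ m) ((e₂ (Φ (TotalSpace.mk m e))).2) := by
    simp only [LinearMap.coe_comp, ContinuousLinearMap.coe_coe, Function.comp_apply]
    rw [← hgA, hgAe]
    exact e₂.symmL_apply (R := ℝ) hm₂ _
  rw [hL]
  have hsrc2 : (TotalSpace.mk (φ m) (e₂.symm (φ m) ((e₂ (Φ (TotalSpace.mk m e))).2))
      : TotalSpace F₂ E₂) ∈ e₂.source := e₂.mem_source.2 hm₂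
  refine (e₂.toPartialHomeomorph.injOn hsrc2 hxsrc ?_).symm
  show e₂ (TotalSpace.mk (φ m) (e₂.symm (φ m) ((e₂ (Φ (TotalSpace.mk m e))).2)))
      = e₂ (Φ (TotalSpace.mk m e))
  rw [e₂.apply_mk_symm hm₂]
  exact Prod.ext hfst.symm rfl
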